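/- Let $K$ be a field with a proper adelic structure $S$ satisfying Northcott's property, and let $h_S$ denote the associated height on projective space. If $(a_0 : \cdots : a_n) \in \mathbb{P}^n(K)$ satisfies $h_S(a_0 : \cdots : a_n) = 0$, then there exists $\lambda \in K^\times$ such that for each $i$, $\lambda a_i$ is either $0$ or a root of unity in $K$. -/

import Mathlib

open MeasureTheory

/-- A (proper) adelic structure on a field `K`: a measure space `Ω`, a family of
absolute values of `K` indexed by `Ω`, such that `ω ↦ log |a|_ω` is integrable for
every `a ∈ K^×`, and the product formula `∫ log |a|_ω dν = 0` holds. -/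
structure ProperAdelicStructure (K : Type) [Field K] (Ω : Type) [MeasurableSpace Ω] where
  ν : Measure Ω
  absv : Ω → AbsoluteValue K ℝ
  integrable_log : ∀ a : K, a ≠ 0 → Integrable (fun ω => Real.log (absv ω a)) ν
  product_formula : ∀ a : K, a ≠ 0 → ∫ ω, Real.log (absv ω a) ∂ν = 0

/-- The height of a tuple of elements of `K` with respect to an adelic structure. -/
noncomputable def ProperAdelicStructure.height {K Ω : Type} [Field K] [MeasurableSpace Ω]
    (S : ProperAdelicStructure K Ω) {m : ℕ} (x : Fin m → K) : ℝ :=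
  ∫ ω, Real.log (⨆ i, S.absv ω (x i)) ∂S.ν

/-- Northcott's property: sets of elements of `K` of bounded height are finite. -/
def ProperAdelicStructure.Northcott {K Ω : Type} [Field K] [MeasurableSpace Ω]
    (S : ProperAdelicStructure K Ω) : Prop :=
  ∀ C : ℝ, {a : K | ∫ ω, Real.log (max (S.absv ω a) 1) ∂S.ν ≤ C}.Finite

/-- `x` is zero or a root of unity. -/
def IsZeroOrRootOfUnity {K : Type} [Field K] (x : K) : Prop :=
  x = 0 ∨ ∃ k : ℕ, 0 < k ∧ x ^ k = 1

lemma integrable_finset_sup' {Ω ι : Type} [MeasurableSpace Ω] {ν : Measure Ω} {f : ι → Ω → ℝ}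
    (s : Finset ι) (hs : s.Nonempty) (h : ∀ i ∈ s, Integrable (f i) ν) :
    Integrable (fun ω => s.sup' hs (fun i => f i ω)) ν := by
  induction hs using Finset.Nonempty.cons_induction with
  | singleton a => simpa using h a (by simp)
  | cons a s ha hs ih =>
      simp only [Finset.sup'_cons hs]
      exact ((h a (Finset.mem_cons_self a s)).sup
        (ih fun i hi => h i (Finset.mem_cons.2 (Or.inr hi))))

lemma log_sup' {ι : Type} (s : Finset ι) (hs : s.Nonempty) (f : ι → ℝ)
    (hf : ∀ i ∈ s, 0 < f i) :
    Real.log (s.sup' hs f) = s.sup' hs (fun i => Real.log (f i)) := by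
  obtain ⟨b, hb, hbe⟩ := Finset.exists_mem_eq_sup' hs f
  refine le_antisymm ?_ ?_
  · rw [hbe]; exact Finset.le_sup' (fun i => Real.log (f i)) hb
  · exact Finset.sup'_le _ _ fun i hi =>
      Real.log_le_log (hf i hi) (Finset.le_sup' f hi)

-- integrability of the log-sup function
lemma integrable_log_sup {K Ω : Type} [Field K] [MeasurableSpace Ω]
    (S : ProperAdelicStructure K Ω) {m : ℕ} (x : Fin m → K) (j : Fin m) (hj : x j ≠ 0) :
    Integrable (fun ω => Real.log (⨆ i, S.absv ω (x i))) S.ν := by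
  classical
  set T : Finset (Fin m) := Finset.univ.filter (fun i => x i ≠ 0) with hT
  have hTne : T.Nonempty := ⟨j, by simp [hT, hj]⟩
  have hxT : ∀ i ∈ T, x i ≠ 0 := fun i hi => (Finset.mem_filter.1 hi).2
  have key : ∀ ω : Ω, Real.log (⨆ i, S.absv ω (x i))
      = T.sup' hTne (fun i => Real.log (S.absv ω (x i))) := by
    intro ω
    have hne : Nonempty (Fin m) := ⟨j⟩
    have h1 : (⨆ i, S.absv ω (x i)) = Finset.univ.sup' Finset.univ_nonempty
        (fun i => S.absv ω (x i)) := (Finset.sup'_univ_eq_ciSup _).symm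
    have h2 : Finset.univ.sup' Finset.univ_nonempty (fun i => S.absv ω (x i))
        = T.sup' hTne (fun i => S.absv ω (x i)) := by
      refine le_antisymm ?_ ?_
      · refine Finset.sup'_le _ _ fun i _ => ?_
        by_cases hx : x i = 0
        · rw [hx, map_zero]
          exact le_trans ((S.absv ω).nonneg _) (Finset.le_sup' (fun i => S.absv ω (x i))
            (Finset.mem_filter.2 ⟨Finset.mem_univ j, hj⟩))
        · exact Finset.le_sup' (fun i => S.absv ω (x i))
            (Finset.mem_filter.2 ⟨Finset.mem_univ i, hx⟩)
      · exact Finset.sup'_le _ _ fun i _ =>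
          Finset.le_sup' (fun i => S.absv ω (x i)) (Finset.mem_univ i)
    rw [h1, h2, log_sup' T hTne _ (fun i hi => (S.absv ω).pos (hxT i hi))]
  have : (fun ω => Real.log (⨆ i, S.absv ω (x i)))
      = fun ω => T.sup' hTne (fun i => Real.log (S.absv ω (x i))) := funext key
  rw [this]
  exact integrable_finset_sup' T hTne fun i hi => S.integrable_log _ (hxT i hi)

theorem height_zero_imp_root_of_unity
    {K Ω : Type} [Field K] [MeasurableSpace Ω]
    (S : ProperAdelicStructure K Ω) (hNor : S.Northcott)
    (n : ℕ) (a : Fin (n + 1) → K) (ha : a ≠ 0)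
    (h0 : S.height a = 0) :
    ∃ lam : K, lam ≠ 0 ∧ ∀ i, IsZeroOrRootOfUnity (lam * a i) := by
  classical
  obtain ⟨j, hj⟩ : ∃ j, a j ≠ 0 := Function.ne_iff.1 ha
  set lam : K := (a j)⁻¹ with hlamdef
  have hlam : lam ≠ 0 := inv_ne_zero hj
  refine ⟨lam, hlam, fun i => ?_⟩
  by_cases hbz : lam * a i = 0
  · exact Or.inl hbz
  set b : K := lam * a i with hbdef
  -- the key bound: ∫ log max(|b|, 1) ≤ 0
  set g : Ω → ℝ := fun ω => Real.log (S.absv ω lam) + Real.log (⨆ k, S.absv ω (a k)) with hg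
  have hgi : Integrable g S.ν :=
    (S.integrable_log lam hlam).add (integrable_log_sup S a j hj)
  have hgint : ∫ ω, g ω ∂S.ν = 0 := by
    rw [hg, integral_add (S.integrable_log lam hlam) (integrable_log_sup S a j hj),
      S.product_formula lam hlam]
    simpa [ProperAdelicStructure.height] using h0
  have hpt : ∀ ω : Ω, Real.log (max (S.absv ω b) 1) ≤ g ω := by
    intro ω
    have hsup_bdd : BddAbove (Set.range fun k => S.absv ω (a k)) :=
      (Set.finite_range _).bddAbove
    have hsup_ge : ∀ k, S.absv ω (a k) ≤ ⨆ k, S.absv ω (a k) :=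
      fun k => le_ciSup hsup_bdd k
    have hupos : 0 < S.absv ω lam := (S.absv ω).pos hlam
    have hvpos : 0 < ⨆ k, S.absv ω (a k) :=
      lt_of_lt_of_le ((S.absv ω).pos hj) (hsup_ge j)
    have hmax : max (S.absv ω b) 1 ≤ S.absv ω lam * ⨆ k, S.absv ω (a k) := by
      refine max_le ?_ ?_
      · rw [hbdef, map_mul]
        exact mul_le_mul_of_nonneg_left (hsup_ge i) hupos.le
      · have h1 : S.absv ω lam * S.absv ω (a j) = 1 := by
          rw [← map_mul, hlamdef, inv_mul_cancel₀ hj, map_one]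
        rw [← h1]
        exact mul_le_mul_of_nonneg_left (hsup_ge j) hupos.le
    calc Real.log (max (S.absv ω b) 1)
        ≤ Real.log (S.absv ω lam * ⨆ k, S.absv ω (a k)) :=
          Real.log_le_log (lt_of_lt_of_le one_pos (le_max_right _ _)) hmax
      _ = g ω := by rw [hg, Real.log_mul hupos.ne' hvpos.ne']
  have hH : ∫ ω, Real.log (max (S.absv ω b) 1) ∂S.ν ≤ 0 := by
    calc ∫ ω, Real.log (max (S.absv ω b) 1) ∂S.ν
        ≤ ∫ ω, g ω ∂S.ν := by
          refine integral_mono_of_nonneg ?_ hgi ?_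
          · exact Filter.Eventually.of_forall fun ω =>
              Real.log_nonneg (le_max_right _ _)
          · exact Filter.Eventually.of_forall hpt
      _ = 0 := hgint
  -- heights of powers
  have hHpow : ∀ k : ℕ, ∫ ω, Real.log (max (S.absv ω (b ^ k)) 1) ∂S.ν ≤ 0 := by
    intro k
    have hpt2 : ∀ ω : Ω, Real.log (max (S.absv ω (b ^ k)) 1)
        = (k : ℝ) * Real.log (max (S.absv ω b) 1) := by
      intro ω
      have h1 : max (S.absv ω (b ^ k)) 1 = (max (S.absv ω b) 1) ^ k := by
        rw [map_pow]
        rcases le_total (S.absv ω b) 1 with h | h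
        · rw [max_eq_right h, max_eq_right (pow_le_one₀ ((S.absv ω).nonneg _) h), one_pow]
        · rw [max_eq_left h, max_eq_left (one_le_pow₀ h)]
      rw [h1, Real.log_pow]
    have : (fun ω => Real.log (max (S.absv ω (b ^ k)) 1))
        = fun ω => (k : ℝ) * Real.log (max (S.absv ω b) 1) := funext hpt2
    rw [this, integral_const_mul]
    exact mul_nonpos_of_nonneg_of_nonpos (Nat.cast_nonneg k) hH
  -- Northcott gives two equal powers
  have hfin := hNor 0
  have hmaps : Set.MapsTo (fun k : ℕ => b ^ k) Set.univ
      {a : K | ∫ ω, Real.log (max (S.absv ω a) 1) ∂S.ν ≤ 0} :=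
    fun k _ => hHpow k
  obtain ⟨k₁, -, k₂, -, hne, heq⟩ :=
    Set.infinite_univ.exists_ne_map_eq_of_mapsTo hmaps hfin
  rcases (Ne.lt_or_gt hne) with hlt | hlt
  · refine Or.inr ⟨k₂ - k₁, Nat.sub_pos_of_lt hlt, ?_⟩
    have h2 : b ^ (k₂ - k₁) * b ^ k₁ = 1 * b ^ k₁ := by
      rw [one_mul, ← pow_add, Nat.sub_add_cancel hlt.le]; exact heq.symm
    exact mul_right_cancel₀ (pow_ne_zero _ hbz) h2
  · refine Or.inr ⟨k₁ - k₂, Nat.sub_pos_of_lt hlt, ?_⟩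
    have h2 : b ^ (k₁ - k₂) * b ^ k₂ = 1 * b ^ k₂ := by
      rw [one_mul, ← pow_add, Nat.sub_add_cancel hlt.le]; exact heq
    exact mul_right_cancel₀ (pow_ne_zero _ hbz) h2
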